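/- If the Kneser graph K(n,k) admits a Hamilton cycle, then the bipartite Kneser graph H(n,k) admits a Hamilton cycle or a Hamilton path. More precisely, given a Hamilton cycle C = (x_1,...,x_N) in K(n,k) with N = C(n,k), the sequences P = (x_1, complement(x_2), x_3, complement(x_4), ...) and P' = (complement(x_1), x_2, complement(x_3), x_4, ...) are spanning paths in H(n,k); if N is odd their concatenation is a Hamilton cycle of H(n,k), and if N is even they are two disjoint cycles spanning H(n,k). -/

import Mathlib

open SimpleGraph

section Helpers
variable {V : Type*} {G : SimpleGraph V}

/-- Build a walk from a vertex sequence with consecutive adjacency. -/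
def walkFromFn (G : SimpleGraph V) (g : ℕ → V) :
    ∀ m : ℕ, (∀ t < m, G.Adj (g t) (g (t + 1))) → G.Walk (g 0) (g m)
  | 0, _ => Walk.nil
  | (m + 1), h =>
      (walkFromFn G g m fun t ht => h t (ht.trans m.lt_succ_self)).concat (h m m.lt_succ_self)

lemma walkFromFn_support (g : ℕ → V) (m : ℕ) (h : ∀ t < m, G.Adj (g t) (g (t + 1))) :
    (walkFromFn G g m h).support = (List.range (m + 1)).map g := by
  induction m with
  | zero => simp [walkFromFn, List.range_succ]
  | succ m ih =>
      simp [walkFromFn, Walk.support_concat, ih, List.range_succ]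

lemma walkFromFn_edges (g : ℕ → V) (m : ℕ) (h : ∀ t < m, G.Adj (g t) (g (t + 1))) :
    (walkFromFn G g m h).edges = (List.range m).map (fun t => s(g t, g (t + 1))) := by
  induction m with
  | zero => simp [walkFromFn]
  | succ m ih =>
      simp [walkFromFn, Walk.edges_concat, ih, List.range_succ]

lemma support_eq_map_getVert {u v : V} (p : G.Walk u v) :
    p.support = (List.range (p.length + 1)).map p.getVert := by
  induction p with
  | nil => simp [List.range_succ]
  | cons h p ih =>
      rw [Walk.support_cons, Walk.length_cons, List.range_succ_eq_map, List.map_cons, ih,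
        List.map_map]
      simp [Function.comp_def, Walk.getVert_cons_succ]

lemma exists_shift (N c m : ℕ) (hN : 0 < N) (hm : m < N) :
    ∃ t, t < N ∧ (c + t) % N = m := by
  refine ⟨(m + N - c % N) % N, Nat.mod_lt _ hN, ?_⟩
  have h1 : c % N ≤ c := Nat.mod_le c N
  have h2 : c % N ≤ N := (Nat.mod_lt c hN).le
  have hdm := Nat.div_add_mod c N
  have key : c + (m + N - c % N) = N * (c / N) + (m + N) := by omega
  calc (c + (m + N - c % N) % N) % N
      = (c + (m + N - c % N)) % N := Nat.add_mod_mod ..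
    _ = m := by rw [key, Nat.mul_add_mod, Nat.add_mod_right, Nat.mod_eq_of_lt hm]

end Helpers

lemma crt_eq (N s t : ℕ) (hodd : N % 2 = 1) (hs : s < 2 * N) (ht : t < 2 * N)
    (h2 : s % 2 = t % 2) (hN : s % N = t % N) : s = t := by
  have key : ∀ s t : ℕ, s ≤ t → t < 2 * N → s % 2 = t % 2 → s % N = t % N → s = t := by
    intro s t h ht h2 hN
    have hd2 : 2 ∣ t - s := by omega
    have hdN : N ∣ t - s := (Nat.modEq_iff_dvd' h).mp hN
    have hcop : Nat.Coprime 2 N := by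
      rw [Nat.coprime_two_left, Nat.odd_iff]; exact hodd
    obtain ⟨c, hc⟩ := hcop.mul_dvd_of_dvd_of_dvd hd2 hdN
    match c with
    | 0 => omega
    | (c + 1) =>
        have : 2 * N * 1 ≤ 2 * N * (c + 1) := Nat.mul_le_mul_left _ (by omega)
        omega
  rcases le_total s t with h | h
  · exact key s t h ht h2 hN
  · exact (key t s h hs h2.symm hN.symm).symm

/-- The Kneser graph `K(n,k)`. -/
def kneserGraph (n k : ℕ) : SimpleGraph {A : Finset (Fin n) // A.card = k} where
  Adj A B := A ≠ B ∧ Disjoint A.1 B.1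
  symm := by constructor; intro A B h; exact ⟨h.1.symm, h.2.symm⟩
  loopless := by constructor; intro A h; exact h.1 rfl

/-- The bipartite Kneser graph `H(n,k)`: vertices are all `k`-element and all
`(n-k)`-element subsets of `{1,…,n}`, with an edge between `A` and `B` iff `A ⊆ B`
or `B ⊆ A` (and `A ≠ B`). -/
def bipartiteKneserGraph (n k : ℕ) :
    SimpleGraph {A : Finset (Fin n) // A.card = k ∨ A.card = n - k} where
  Adj A B := A ≠ B ∧ (A.1 ⊆ B.1 ∨ B.1 ⊆ A.1)
  symm := by constructor; intro A B h; exact ⟨h.1.symm, h.2.symm⟩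
  loopless := by constructor; intro A h; exact h.1 rfl

/-- If `K(n,k)` admits a Hamilton cycle, then `H(n,k)` admits a Hamilton cycle
or a Hamilton path. -/
theorem bipartite_kneser_of_kneser (n k : ℕ) (hk : 1 ≤ k) (hn : 2 * k + 1 ≤ n)
    (hK : ∃ (a : {A : Finset (Fin n) // A.card = k}) (p : (kneserGraph n k).Walk a a),
      p.IsHamiltonianCycle) :
    (∃ (a : {A : Finset (Fin n) // A.card = k ∨ A.card = n - k})
        (p : (bipartiteKneserGraph n k).Walk a a), p.IsHamiltonianCycle) ∨
    (∃ (a b : {A : Finset (Fin n) // A.card = k ∨ A.card = n - k})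
        (p : (bipartiteKneserGraph n k).Walk a b), p.IsHamiltonian) := by
  classical
  obtain ⟨a, p, hp⟩ := hK
  set N := p.length with hNdef
  have hN3 : 3 ≤ N := hp.isCycle.three_le_length
  set f : ℕ → {A : Finset (Fin n) // A.card = k} := p.getVert with hfdef
  have hf0 : f 0 = a := p.getVert_zero
  have hfN : f N = a := p.getVert_length
  have hfadj : ∀ m < N, (kneserGraph n k).Adj (f m) (f (m + 1)) :=
    fun m hm => p.adj_getVert_succ hm
  have hadjc : ∀ m < N, (kneserGraph n k).Adj (f m) (f ((m + 1) % N)) := by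
    intro m hm
    rcases lt_or_eq_of_le (Nat.succ_le_of_lt hm) with h | h
    · rw [Nat.mod_eq_of_lt h]; exact hfadj m hm
    · have h0 : (m + 1) % N = 0 := by rw [← h]; exact Nat.mod_self _
      rw [h0, hf0, ← hfN, ← h]
      exact hfadj m hm
  have hsupp : p.support = (List.range (N + 1)).map f := support_eq_map_getVert p
  have htail : p.support.tail = (List.range N).map (fun m => f (m + 1)) := by
    rw [hsupp, List.range_succ_eq_map, List.map_cons, List.tail_cons, List.map_map]
    rfl
  have hnodup := hp.isCycle.support_nodup
  rw [htail] at hnodup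
  have hinj1 : ∀ s < N, ∀ t < N, f (s + 1) = f (t + 1) → s = t := by
    intro s hs t ht h
    exact List.inj_on_of_nodup_map hnodup (List.mem_range.mpr hs) (List.mem_range.mpr ht) h
  have hinj : ∀ s < N, ∀ t < N, f s = f t → s = t := by
    intro s hs t ht h
    match s, t with
    | 0, 0 => rfl
    | 0, (t + 1) =>
        exfalso
        have h' : f ((N - 1) + 1) = f (t + 1) := by
          rw [Nat.sub_add_cancel (by omega), hfN, ← h, hf0]
        have := hinj1 (N - 1) (by omega) t (by omega) h'
        omega
    | (s + 1), 0 =>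
        exfalso
        have h' : f (s + 1) = f ((N - 1) + 1) := by
          rw [Nat.sub_add_cancel (by omega), hfN, h, hf0]
        have := hinj1 s (by omega) (N - 1) (by omega) h'
        omega
    | (s + 1), (t + 1) =>
        have := hinj1 s (by omega) t (by omega) h
        omega
  have hsurj : ∀ v, ∃ m, m < N ∧ f m = v := by
    intro v
    have hv := hp.mem_support v
    rw [hsupp] at hv
    obtain ⟨m, hm, hfm⟩ := List.mem_map.mp hv
    rw [List.mem_range] at hm
    rcases lt_or_eq_of_le (Nat.lt_succ_iff.mp hm) with h | h
    · exact ⟨m, h, hfm⟩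
    · exact ⟨0, by omega, by rw [hf0, ← hfN, ← h, hfm]⟩
  have hkn : k < n - k := by omega
  set inc : {A : Finset (Fin n) // A.card = k} →
      {A : Finset (Fin n) // A.card = k ∨ A.card = n - k} :=
    fun A => ⟨A.1, Or.inl A.2⟩ with hincdef
  set cmp : {A : Finset (Fin n) // A.card = k} →
      {A : Finset (Fin n) // A.card = k ∨ A.card = n - k} :=
    fun A => ⟨A.1ᶜ, Or.inr (by rw [Finset.card_compl, Fintype.card_fin, A.2])⟩ with hcmpdef
  have hcardinc : ∀ A, (inc A).1.card = k := fun A => A.2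
  have hcardcmp : ∀ A, (cmp A).1.card = n - k := fun A => by
    simp only [hcmpdef, Finset.card_compl, Fintype.card_fin, A.2]
  have hne : ∀ A B, inc A ≠ cmp B := by
    intro A B h
    have h2 := congrArg (fun v => v.1.card) h
    simp only [hcardinc A, hcardcmp B] at h2
    omega
  have hic : ∀ A B, (kneserGraph n k).Adj A B →
      (bipartiteKneserGraph n k).Adj (inc A) (cmp B) := by
    intro A B hAB
    refine ⟨hne A B, Or.inl ?_⟩
    intro x hx
    simp only [hcmpdef, Finset.mem_compl]
    exact fun hxB => (Finset.disjoint_left.mp hAB.2) hx hxB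
  have hci : ∀ A B, (kneserGraph n k).Adj A B →
      (bipartiteKneserGraph n k).Adj (cmp A) (inc B) :=
    fun A B h => (hic B A h.symm).symm
  have hincinj : ∀ A B, inc A = inc B → A = B :=
    fun A B h => Subtype.ext (congrArg (fun v => v.1) h)
  have hcmpinj : ∀ A B, cmp A = cmp B → A = B := by
    intro A B h
    have h2 : A.1ᶜ = B.1ᶜ := congrArg (fun v => v.1) h
    exact Subtype.ext (compl_injective h2)
  have hNpos : 0 < N := by omega
  by_cases hNo : N % 2 = 1
  · -- N odd: Hamiltonian cycle
    left
    set g : ℕ → {A : Finset (Fin n) // A.card = k ∨ A.card = n - k} :=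
      fun t => if t % 2 = 0 then inc (f (t % N)) else cmp (f (t % N)) with hgdef
    have hg0 : g 0 = inc (f 0) := by simp [hgdef]
    have hg2N : g (2 * N) = g 0 := by
      have e1 : 2 * N % 2 = 0 := by omega
      have e2 : 2 * N % N = 0 := Nat.mul_mod_left 2 N
      simp [hgdef, e1, e2]
    have hgadj : ∀ t < 2 * N, (bipartiteKneserGraph n k).Adj (g t) (g (t + 1)) := by
      intro t ht
      have hm : t % N < N := Nat.mod_lt _ hNpos
      have hmod : (t + 1) % N = (t % N + 1) % N := by
        conv_lhs => rw [Nat.add_mod]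
        rw [Nat.mod_eq_of_lt (show 1 < N by omega)]
      have hKa := hadjc (t % N) hm
      by_cases h2 : t % 2 = 0
      · simp only [hgdef]
        rw [if_pos h2, if_neg (show ¬ (t + 1) % 2 = 0 by omega), hmod]
        exact hic _ _ hKa
      · simp only [hgdef]
        rw [if_neg h2, if_pos (show (t + 1) % 2 = 0 by omega), hmod]
        exact hci _ _ hKa
    have hgadj' : ∀ t < 2 * N - 1,
        (bipartiteKneserGraph n k).Adj (g (t + 1)) (g (t + 1 + 1)) :=
      fun t ht => hgadj (t + 1) (by omega)
    have hq0e : g (2 * N - 1 + 1) = g 0 := by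
      rw [Nat.sub_add_cancel (by omega)]; exact hg2N
    let q : (bipartiteKneserGraph n k).Walk (g 1) (g 0) :=
      (walkFromFn (bipartiteKneserGraph n k) (fun t => g (t + 1)) (2 * N - 1) hgadj').copy rfl hq0e
    have hrange : 2 * N - 1 + 1 = 2 * N := by omega
    have hqsupp : q.support = (List.range (2 * N)).map (fun t => g (t + 1)) := by
      show ((walkFromFn _ _ _ hgadj').copy rfl hq0e).support = _
      rw [Walk.support_copy, walkFromFn_support, hrange]
    have hginj : ∀ s < 2 * N, ∀ t < 2 * N, g s = g t → s = t := by
      intro s hs t ht hgst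
      have hsm : s % N < N := Nat.mod_lt _ hNpos
      have htm : t % N < N := Nat.mod_lt _ hNpos
      simp only [hgdef] at hgst
      by_cases hs2 : s % 2 = 0 <;> by_cases ht2 : t % 2 = 0
      · rw [if_pos hs2, if_pos ht2] at hgst
        have := hinj _ hsm _ htm (hincinj _ _ hgst)
        exact crt_eq N s t hNo hs ht (by omega) this
      · rw [if_pos hs2, if_neg ht2] at hgst
        exact absurd hgst (hne _ _)
      · rw [if_neg hs2, if_pos ht2] at hgst
        exact absurd hgst.symm (hne _ _)
      · rw [if_neg hs2, if_neg ht2] at hgst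
        have := hinj _ hsm _ htm (hcmpinj _ _ hgst)
        exact crt_eq N s t hNo hs ht (by omega) this
    have hgsurj : ∀ v : {A : Finset (Fin n) // A.card = k ∨ A.card = n - k},
        ∃ s, 1 ≤ s ∧ s ≤ 2 * N ∧ g s = v := by
      intro v
      obtain h | h := v.2
      · obtain ⟨m, hm, hfm⟩ := hsurj ⟨v.1, h⟩
        have hv : inc (f m) = v := by rw [hfm]
        by_cases hm2 : m % 2 = 0
        · rcases Nat.eq_zero_or_pos m with rfl | hmpos
          · exact ⟨2 * N, by omega, le_refl _, by rw [hg2N, hg0]; exact hv⟩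
          · refine ⟨m, by omega, by omega, ?_⟩
            simp only [hgdef]
            rw [if_pos hm2, Nat.mod_eq_of_lt hm]; exact hv
        · refine ⟨m + N, by omega, by omega, ?_⟩
          simp only [hgdef]
          rw [if_pos (show (m + N) % 2 = 0 by omega), Nat.add_mod_right,
            Nat.mod_eq_of_lt hm]
          exact hv
      · have hc : v.1ᶜ.card = k := by
          rw [Finset.card_compl, Fintype.card_fin, h]; omega
        obtain ⟨m, hm, hfm⟩ := hsurj ⟨v.1ᶜ, hc⟩
        have hv : cmp (f m) = v := by
          rw [hfm]; exact Subtype.ext (compl_compl v.1)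
        by_cases hm2 : m % 2 = 0
        · refine ⟨m + N, by omega, by omega, ?_⟩
          simp only [hgdef]
          rw [if_neg (show ¬ (m + N) % 2 = 0 by omega), Nat.add_mod_right,
            Nat.mod_eq_of_lt hm]
          exact hv
        · refine ⟨m, by omega, by omega, ?_⟩
          simp only [hgdef]
          rw [if_neg hm2, Nat.mod_eq_of_lt hm]; exact hv
    have hqmem : ∀ v, v ∈ q.support := by
      intro v
      obtain ⟨s, hs1, hs2, hgs⟩ := hgsurj v
      rw [hqsupp]
      refine List.mem_map.mpr ⟨s - 1, List.mem_range.mpr (by omega), ?_⟩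
      have hss : s - 1 + 1 = s := by omega
      rw [hss, hgs]
    have hqnodup : q.support.Nodup := by
      rw [hqsupp]
      refine List.Nodup.map_on ?_ List.nodup_range
      intro s hs t ht h
      rw [List.mem_range] at hs ht
      by_cases hs' : s + 1 < 2 * N <;> by_cases ht' : t + 1 < 2 * N
      · have := hginj _ hs' _ ht' h; omega
      · have ht1 : t + 1 = 2 * N := by omega
        rw [ht1, hg2N] at h
        have := hginj _ hs' 0 (by omega) h; omega
      · have hs1 : s + 1 = 2 * N := by omega
        rw [hs1, hg2N] at h
        have := hginj 0 (by omega) _ ht' h; omega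
      · omega
    have hqpath : q.IsPath := Walk.IsPath.mk' hqnodup
    have hcyc0 : (bipartiteKneserGraph n k).Adj (g 0) (g 1) := hgadj 0 (by omega)
    have hcedge : s(g 0, g 1) ∉ q.edges := by
      intro hmem
      have hqe : q.edges =
          (List.range (2 * N - 1)).map (fun t => s(g (t + 1), g (t + 1 + 1))) := by
        show ((walkFromFn _ _ _ hgadj').copy rfl hq0e).edges = _
        rw [Walk.edges_copy, walkFromFn_edges]
      rw [hqe] at hmem
      obtain ⟨t, htr, hteq⟩ := List.mem_map.mp hmem
      rw [List.mem_range] at htr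
      rw [Sym2.eq_iff] at hteq
      rcases hteq with ⟨h1, h2⟩ | ⟨h1, h2⟩
      · have := hginj (t + 1) (by omega) 0 (by omega) h1; omega
      · by_cases htt : t + 1 + 1 < 2 * N
        · have := hginj (t + 1 + 1) htt 0 (by omega) h2; omega
        · have := hginj (t + 1) (by omega) 1 (by omega) h1
          omega
    have hccyc : (Walk.cons hcyc0 q).IsCycle :=
      (Walk.cons_isCycle_iff q hcyc0).mpr ⟨hqpath, hcedge⟩
    refine ⟨g 0, Walk.cons hcyc0 q,
      (Walk.isHamiltonianCycle_iff_isCycle_and_support_count_tail_eq_one).mpr ⟨hccyc, ?_⟩⟩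
    intro v
    rw [Walk.support_cons, List.tail_cons]
    exact @List.count_eq_one_of_mem _ instBEqOfDecidableEq _ _ _ hqnodup (hqmem v)
  · -- N even: Hamiltonian path
    right
    have hNe : N % 2 = 0 := by omega
    -- Erdős–Ko–Rado: find a "chord" between two even-indexed vertices
    have hNcard : N = Nat.choose n k := by
      rw [hNdef, hp.length_eq, Fintype.card_finset_len, Fintype.card_fin]
    have hCpos : 0 < Nat.choose (n - 1) (k - 1) := Nat.choose_pos (by omega)
    have hid : n * Nat.choose (n - 1) (k - 1) = Nat.choose n k * k := by
      have h := Nat.add_one_mul_choose_eq (n - 1) (k - 1)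
      have e1 : n - 1 + 1 = n := by omega
      have e2 : k - 1 + 1 = k := by omega
      rw [e1, e2] at h
      exact h
    have hchoose : 2 * Nat.choose (n - 1) (k - 1) < Nat.choose n k := by
      by_contra hcon
      push_neg at hcon
      have h1 : Nat.choose n k * k ≤ 2 * Nat.choose (n - 1) (k - 1) * k :=
        Nat.mul_le_mul_right _ hcon
      nlinarith [hid, hCpos, hn, hk]
    have hN2C : 2 * Nat.choose (n - 1) (k - 1) < N := by rw [hNcard]; exact hchoose
    set E : Finset (Finset (Fin n)) :=
      (Finset.range (N / 2)).image (fun t => (f (2 * t)).1) with hEdef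
    have hEcard : E.card = N / 2 := by
      rw [hEdef, Finset.card_image_of_injOn, Finset.card_range]
      intro s hs t ht hst
      rw [Finset.coe_range, Set.mem_Iio] at hs ht
      have h1 := hinj (2 * s) (by omega) (2 * t) (by omega) (Subtype.ext hst)
      omega
    have hEsized : (E : Set (Finset (Fin n))).Sized k := by
      intro A hA
      obtain ⟨t, ht, rfl⟩ := Finset.mem_image.mp (Finset.mem_coe.mp hA)
      exact (f (2 * t)).2
    have hnotint : ¬ (E : Set (Finset (Fin n))).Intersecting := by
      intro hint
      have hle := Finset.erdos_ko_rado hint hEsized (by omega)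
      rw [hEcard] at hle
      omega
    unfold Set.Intersecting at hnotint
    push_neg at hnotint
    obtain ⟨A, hA, B, hB, hABdisj⟩ := hnotint
    obtain ⟨s₀, hs₀, hAeq⟩ := Finset.mem_image.mp (Finset.mem_coe.mp hA)
    obtain ⟨t₀, ht₀, hBeq⟩ := Finset.mem_image.mp (Finset.mem_coe.mp hB)
    rw [Finset.mem_range] at hs₀ ht₀
    have hiN : 2 * s₀ < N := by omega
    have hjN : 2 * t₀ < N := by omega
    set i := 2 * s₀ with hidef
    set j := 2 * t₀ with hjdef
    have hi2 : i % 2 = 0 := by omega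
    have hj2 : j % 2 = 0 := by omega
    have hfij : f i ≠ f j := by
      intro hcon
      have hAB : A = B := by rw [← hAeq, ← hBeq, hcon]
      rw [hAB] at hABdisj
      have hBempty : B = ∅ := by simpa using disjoint_self.mp hABdisj
      have hBcard : B.card = k := by rw [← hBeq]; exact (f j).2
      rw [hBempty, Finset.card_empty] at hBcard
      omega
    have hKadj : (kneserGraph n k).Adj (f i) (f j) := by
      refine ⟨hfij, ?_⟩
      rw [← hAeq, ← hBeq] at hABdisj
      exact hABdisj
    -- the spanning path
    have hpar : ∀ x : ℕ, x % N % 2 = x % 2 := fun x => Nat.mod_mod_of_dvd x (by omega)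
    have hsucc : ∀ x : ℕ, (x + 1) % N = (x % N + 1) % N := by
      intro x
      conv_lhs => rw [Nat.add_mod]
      rw [Nat.mod_eq_of_lt (show 1 < N by omega)]
    set F : ℕ → {A : Finset (Fin n) // A.card = k ∨ A.card = n - k} :=
      fun m => if m % 2 = 0 then inc (f m) else cmp (f m) with hFdef
    set Gg : ℕ → {A : Finset (Fin n) // A.card = k ∨ A.card = n - k} :=
      fun m => if m % 2 = 0 then cmp (f m) else inc (f m) with hGdef
    set g : ℕ → {A : Finset (Fin n) // A.card = k ∨ A.card = n - k} :=
      fun t => if t < N then F ((i + 1 + t) % N) else Gg ((j + (t - N)) % N) with hgdef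
    have hFadj : ∀ m < N, (bipartiteKneserGraph n k).Adj (F m) (F ((m + 1) % N)) := by
      intro m hm
      have hKa := hadjc m hm
      have hp2 : (m + 1) % N % 2 = (m + 1) % 2 := hpar _
      by_cases h2 : m % 2 = 0
      · simp only [hFdef]
        rw [if_pos h2, if_neg (show ¬ (m + 1) % N % 2 = 0 by omega)]
        exact hic _ _ hKa
      · simp only [hFdef]
        rw [if_neg h2, if_pos (show (m + 1) % N % 2 = 0 by omega)]
        exact hci _ _ hKa
    have hGadj : ∀ m < N, (bipartiteKneserGraph n k).Adj (Gg m) (Gg ((m + 1) % N)) := by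
      intro m hm
      have hKa := hadjc m hm
      have hp2 : (m + 1) % N % 2 = (m + 1) % 2 := hpar _
      by_cases h2 : m % 2 = 0
      · simp only [hGdef]
        rw [if_pos h2, if_neg (show ¬ (m + 1) % N % 2 = 0 by omega)]
        exact hci _ _ hKa
      · simp only [hGdef]
        rw [if_neg h2, if_pos (show (m + 1) % N % 2 = 0 by omega)]
        exact hic _ _ hKa
    have hgadj : ∀ t < 2 * N - 1, (bipartiteKneserGraph n k).Adj (g t) (g (t + 1)) := by
      intro t ht
      by_cases h1 : t + 1 < N
      · have h0 : t < N := by omega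
        simp only [hgdef]
        rw [if_pos h0, if_pos h1]
        have e : (i + 1 + (t + 1)) % N = ((i + 1 + t) % N + 1) % N := by
          have e' : i + 1 + (t + 1) = (i + 1 + t) + 1 := by omega
          rw [e', hsucc]
        rw [e]
        exact hFadj _ (Nat.mod_lt _ hNpos)
      · by_cases h0 : t < N
        · simp only [hgdef]
          rw [if_pos h0, if_neg (show ¬ t + 1 < N by omega)]
          have e1 : (i + 1 + t) % N = i := by
            have e : i + 1 + t = i + N := by omega
            rw [e, Nat.add_mod_right, Nat.mod_eq_of_lt hiN]
          have e2 : (j + (t + 1 - N)) % N = j := by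
            have e : t + 1 - N = 0 := by omega
            rw [e, Nat.add_zero, Nat.mod_eq_of_lt hjN]
          rw [e1, e2]
          simp only [hFdef, hGdef]
          rw [if_pos hi2, if_pos hj2]
          exact hic _ _ hKadj
        · simp only [hgdef]
          rw [if_neg h0, if_neg (show ¬ t + 1 < N by omega)]
          have e : j + (t + 1 - N) = (j + (t - N)) + 1 := by omega
          rw [e, hsucc]
          exact hGadj _ (Nat.mod_lt _ hNpos)
    have hcancel : ∀ c : ℕ, ∀ u, u < N → ∀ u', u' < N →
        (c + u) % N = (c + u') % N → u = u' := by
      intro c u hu u' hu' h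
      have h1 : u ≡ u' [MOD N] := Nat.ModEq.add_left_cancel' c h
      have h2 : u % N = u' % N := h1
      rw [Nat.mod_eq_of_lt hu, Nat.mod_eq_of_lt hu'] at h2
      exact h2
    have hginj : ∀ s < 2 * N, ∀ t < 2 * N, g s = g t → s = t := by
      intro s hs t ht h
      by_cases hsN : s < N <;> by_cases htN : t < N
      · simp only [hgdef] at h
        rw [if_pos hsN, if_pos htN] at h
        simp only [hFdef] at h
        by_cases a1 : (i + 1 + s) % N % 2 = 0 <;>
          by_cases a2 : (i + 1 + t) % N % 2 = 0
        · rw [if_pos a1, if_pos a2] at h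
          exact hcancel (i + 1) s hsN t htN
            (hinj _ (Nat.mod_lt _ hNpos) _ (Nat.mod_lt _ hNpos) (hincinj _ _ h))
        · rw [if_pos a1, if_neg a2] at h
          exact absurd h (hne _ _)
        · rw [if_neg a1, if_pos a2] at h
          exact absurd h.symm (hne _ _)
        · rw [if_neg a1, if_neg a2] at h
          exact hcancel (i + 1) s hsN t htN
            (hinj _ (Nat.mod_lt _ hNpos) _ (Nat.mod_lt _ hNpos) (hcmpinj _ _ h))
      · exfalso
        simp only [hgdef] at h
        rw [if_pos hsN, if_neg htN] at h
        simp only [hFdef, hGdef] at h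
        by_cases a1 : (i + 1 + s) % N % 2 = 0 <;>
          by_cases a2 : (j + (t - N)) % N % 2 = 0
        · rw [if_pos a1, if_pos a2] at h; exact hne _ _ h
        · rw [if_pos a1, if_neg a2] at h
          have heq := hinj _ (Nat.mod_lt _ hNpos) _ (Nat.mod_lt _ hNpos) (hincinj _ _ h)
          rw [heq] at a1; exact a2 a1
        · rw [if_neg a1, if_pos a2] at h
          have heq := hinj _ (Nat.mod_lt _ hNpos) _ (Nat.mod_lt _ hNpos) (hcmpinj _ _ h)
          rw [heq] at a1; exact a1 a2
        · rw [if_neg a1, if_neg a2] at h; exact hne _ _ h.symm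
      · exfalso
        simp only [hgdef] at h
        rw [if_neg hsN, if_pos htN] at h
        simp only [hFdef, hGdef] at h
        by_cases a1 : (i + 1 + t) % N % 2 = 0 <;>
          by_cases a2 : (j + (s - N)) % N % 2 = 0
        · rw [if_pos a2, if_pos a1] at h; exact hne _ _ h.symm
        · rw [if_neg a2, if_pos a1] at h
          have heq := hinj _ (Nat.mod_lt _ hNpos) _ (Nat.mod_lt _ hNpos) (hincinj _ _ h.symm)
          rw [heq] at a1; exact a2 a1
        · rw [if_pos a2, if_neg a1] at h
          have heq := hinj _ (Nat.mod_lt _ hNpos) _ (Nat.mod_lt _ hNpos) (hcmpinj _ _ h.symm)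
          rw [heq] at a1; exact a1 a2
        · rw [if_neg a2, if_neg a1] at h; exact hne _ _ h
      · simp only [hgdef] at h
        rw [if_neg hsN, if_neg htN] at h
        simp only [hGdef] at h
        have key : s - N = t - N → s = t := by omega
        by_cases a1 : (j + (s - N)) % N % 2 = 0 <;>
          by_cases a2 : (j + (t - N)) % N % 2 = 0
        · rw [if_pos a1, if_pos a2] at h
          exact key (hcancel j (s - N) (by omega) (t - N) (by omega)
            (hinj _ (Nat.mod_lt _ hNpos) _ (Nat.mod_lt _ hNpos) (hcmpinj _ _ h)))
        · rw [if_pos a1, if_neg a2] at h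
          exact absurd h.symm (hne _ _)
        · rw [if_neg a1, if_pos a2] at h
          exact absurd h (hne _ _)
        · rw [if_neg a1, if_neg a2] at h
          exact key (hcancel j (s - N) (by omega) (t - N) (by omega)
            (hinj _ (Nat.mod_lt _ hNpos) _ (Nat.mod_lt _ hNpos) (hincinj _ _ h)))
    have hgsurj : ∀ v : {A : Finset (Fin n) // A.card = k ∨ A.card = n - k},
        ∃ t, t < 2 * N ∧ g t = v := by
      intro v
      obtain hv | hv := v.2
      · obtain ⟨m, hm, hfm⟩ := hsurj ⟨v.1, hv⟩
        have hveq : inc (f m) = v := by rw [hfm]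
        by_cases hm2 : m % 2 = 0
        · obtain ⟨t, htN, hteq⟩ := exists_shift N (i + 1) m hNpos hm
          refine ⟨t, by omega, ?_⟩
          simp only [hgdef]
          rw [if_pos htN]
          simp only [hFdef]
          rw [hteq, if_pos hm2]
          exact hveq
        · obtain ⟨t, htN, hteq⟩ := exists_shift N j m hNpos hm
          refine ⟨N + t, by omega, ?_⟩
          simp only [hgdef]
          rw [if_neg (show ¬ N + t < N by omega)]
          have e : N + t - N = t := by omega
          rw [e, hteq]
          simp only [hGdef]
          rw [if_neg hm2]
          exact hveq
      · have hc : v.1ᶜ.card = k := by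
          rw [Finset.card_compl, Fintype.card_fin, hv]; omega
        obtain ⟨m, hm, hfm⟩ := hsurj ⟨v.1ᶜ, hc⟩
        have hveq : cmp (f m) = v := by
          rw [hfm]; exact Subtype.ext (compl_compl v.1)
        by_cases hm2 : m % 2 = 0
        · obtain ⟨t, htN, hteq⟩ := exists_shift N j m hNpos hm
          refine ⟨N + t, by omega, ?_⟩
          simp only [hgdef]
          rw [if_neg (show ¬ N + t < N by omega)]
          have e : N + t - N = t := by omega
          rw [e, hteq]
          simp only [hGdef]
          rw [if_pos hm2]
          exact hveq
        · obtain ⟨t, htN, hteq⟩ := exists_shift N (i + 1) m hNpos hm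
          refine ⟨t, by omega, ?_⟩
          simp only [hgdef]
          rw [if_pos htN]
          simp only [hFdef]
          rw [hteq, if_neg hm2]
          exact hveq
    refine ⟨g 0, g (2 * N - 1), walkFromFn (bipartiteKneserGraph n k) g (2 * N - 1) hgadj, ?_⟩
    have hr : 2 * N - 1 + 1 = 2 * N := by omega
    have hPsupp : (walkFromFn (bipartiteKneserGraph n k) g (2 * N - 1) hgadj).support =
        (List.range (2 * N)).map g := by
      rw [walkFromFn_support, hr]
    have hPnodup :
        (walkFromFn (bipartiteKneserGraph n k) g (2 * N - 1) hgadj).support.Nodup := by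
      rw [hPsupp]
      refine List.Nodup.map_on ?_ List.nodup_range
      intro s hs t ht h
      exact hginj s (List.mem_range.mp hs) t (List.mem_range.mp ht) h
    intro v
    obtain ⟨t, htN, hgt⟩ := hgsurj v
    have hmem : v ∈ (walkFromFn (bipartiteKneserGraph n k) g (2 * N - 1) hgadj).support := by
      rw [hPsupp]
      exact List.mem_map.mpr ⟨t, List.mem_range.mpr htN, hgt⟩
    exact @List.count_eq_one_of_mem _ instBEqOfDecidableEq _ _ _ hPnodup hmem
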